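/- arXiv:math/9905053 — 3 statements merged into one kernel-verified Lean document; each statement's English description precedes it below -/
import Mathlib

section
/- Let K be an algebraically closed field and H a finite group. Then the following are equivalent: (1) every nonzero finite-dimensional representation of H over K has a common eigenvector, i.e. a nonzero vector v such that every element of H sends v to a scalar multiple of v; (2) there is a normal subgroup U of H such that the quotient H/U is abelian and every element of U has order a power of the characteristic of K (in particular U is trivial when char K = 0). -/
open Module Polynomial

/-- Common eigenvector for a commuting family of endomorphisms over an
algebraically closed field. -/
theorem exists_common_eigenvector {K : Type} [Field K] [IsAlgClosed K] {ι : Type}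
    (s : Finset ι) :
    ∀ (V : Type) [AddCommGroup V] [Module K V] [FiniteDimensional K V],
      (∃ v : V, v ≠ 0) → ∀ (f : ι → Module.End K V), (∀ i j, Commute (f i) (f j)) →
      ∃ v : V, v ≠ 0 ∧ ∀ i ∈ s, ∃ c : K, f i v = c • v := by
  classical
  induction s using Finset.induction with
  | empty =>
    rintro V _ _ _ ⟨v, hv⟩ f _
    exact ⟨v, hv, by simp⟩
  | @insert a s ha ih =>
    rintro V _ _ _ ⟨v0, hv0⟩ f hcomm
    haveI : Nontrivial V := ⟨v0, 0, hv0⟩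
    obtain ⟨μ, hμ⟩ := Module.End.exists_eigenvalue (f a)
    have hEbot : (f a).eigenspace μ ≠ ⊥ := hμ
    have hmap : ∀ i, Set.MapsTo (f i) ((f a).eigenspace μ) ((f a).eigenspace μ) := fun i =>
      Module.End.mapsTo_genEigenspace_of_comm (hcomm a i) μ 1
    obtain ⟨w, hwmem, hw0⟩ := Submodule.exists_mem_ne_zero_of_ne_bot hEbot
    have hex : ∃ v : ((f a).eigenspace μ), v ≠ 0 := ⟨⟨w, hwmem⟩, by
      simp only [ne_eq, Submodule.mk_eq_zero]; exact hw0⟩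
    have hcomm' : ∀ i j, Commute ((f i).restrict (hmap i)) ((f j).restrict (hmap j)) := by
      intro i j
      ext ⟨x, hx⟩
      have := congrArg (fun g : Module.End K V => g x) (hcomm i j)
      exact this
    obtain ⟨v, hv0', hv⟩ := ih _ hex (fun i => (f i).restrict (hmap i)) hcomm'
    refine ⟨(v : V), by simpa [Submodule.coe_eq_zero] using hv0', ?_⟩
    intro i hi
    rcases Finset.mem_insert.mp hi with rfl | hi
    · exact ⟨μ, Module.End.mem_eigenspace_iff.mp v.2⟩
    · obtain ⟨c, hc⟩ := hv i hi
      exact ⟨c, by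
        have := congrArg (Subtype.val) hc
        exact this⟩

/-- A `p`-group acting linearly in characteristic `p` has a nonzero fixed vector. -/
theorem exists_fixed_of_pgroup {K : Type} [Field K] {V : Type} [AddCommGroup V] [Module K V]
    (p : ℕ) [Fact p.Prime] [CharP K p] {G : Type} [Group G] [Finite G]
    (hG : IsPGroup p G) (ρ : Representation K G V) {v : V} (hv : v ≠ 0) :
    ∃ w : V, w ≠ 0 ∧ ∀ g : G, ρ g w = w := by
  classical
  letI : Algebra (ZMod p) K := ZMod.algebra _ _
  letI : Module (ZMod p) V := Module.compHom V (algebraMap (ZMod p) K)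
  have hsmul : ∀ (c : ZMod p) (x : V), c • x = (algebraMap (ZMod p) K c) • x := fun _ _ => rfl
  let ρ' : G → V →ₗ[ZMod p] V := fun g =>
    { toFun := ρ g
      map_add' := map_add _
      map_smul' := fun c x => by
        show ρ g (c • x) = c • ρ g x
        rw [hsmul, hsmul, map_smul] }
  let W : Submodule (ZMod p) V := Submodule.span (ZMod p) (Set.range fun g : G => ρ g v)
  have hWmap : ∀ g : G, ∀ x ∈ W, ρ g x ∈ W := by
    intro g x hx
    have : Submodule.map (ρ' g) W ≤ W := by
      rw [Submodule.map_span, Submodule.span_le]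
      rintro _ ⟨_, ⟨h, rfl⟩, rfl⟩
      refine Submodule.subset_span ⟨g * h, ?_⟩
      show ρ (g * h) v = ρ' g (ρ h v)
      simp [ρ', map_mul]
    exact this (Submodule.mem_map_of_mem hx)
  have hvW : v ∈ W := Submodule.subset_span ⟨1, by simp⟩
  haveI : Module.Finite (ZMod p) W := by
    apply FiniteDimensional.span_of_finite
    exact Set.finite_range _
  haveI : Finite W := Module.finite_of_finite (ZMod p)
  haveI : Fintype W := Fintype.ofFinite W
  letI : MulAction G W :=
    { smul := fun g w => ⟨ρ g w, hWmap g w w.2⟩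
      one_smul := fun w => by ext; show ρ 1 (w : V) = w; simp
      mul_smul := fun g h w => by
        ext; show ρ (g * h) (w : V) = ρ g (ρ h (w : V)); simp [map_mul] }
  have hzero : (0 : W) ∈ MulAction.fixedPoints G W := by
    intro g; ext; show ρ g 0 = (0 : V); simp
  haveI : Nontrivial W := ⟨⟨v, hvW⟩, 0, by simp [Subtype.ext_iff, hv]⟩
  have hdvd : p ∣ Nat.card W := by
    have hcard : Fintype.card W = p ^ (Module.finrank (ZMod p) W) := by
      have := card_eq_pow_finrank (K := ZMod p) (V := W)
      simpa [ZMod.card] using this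
    have hpos : 0 < Module.finrank (ZMod p) W := Module.finrank_pos
    rw [Nat.card_eq_fintype_card, hcard]
    exact dvd_pow_self p hpos.ne'
  obtain ⟨b, hb, hb0⟩ := hG.exists_fixed_point_of_prime_dvd_card_of_fixed_point W hdvd hzero
  refine ⟨(b : V), ?_, ?_⟩
  · intro h; exact hb0 (by ext; simp [h])
  · intro g
    exact congrArg Subtype.val (hb g)

/-- If every nonzero finite-dimensional representation has a common eigenvector, then any
element killed by all characters acts unipotently on every finite-dimensional rep. -/
theorem unipotent_of_common_eigen {K : Type} [Field K] {H : Type} [Group H]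
    (heig : ∀ (V : Type) [AddCommGroup V] [Module K V] [FiniteDimensional K V]
        (ρ : Representation K H V), (∃ v : V, v ≠ 0) →
        ∃ v : V, v ≠ 0 ∧ ∀ h : H, ∃ c : K, ρ h v = c • v) :
    ∀ (n : ℕ) (V : Type) [AddCommGroup V] [Module K V] [FiniteDimensional K V],
      Module.finrank K V ≤ n → ∀ (ρ : Representation K H V) (u : H),
      (∀ χ : H →* Kˣ, χ u = 1) → ((ρ u : Module.End K V) - 1) ^ n = 0 := by
  classical
  intro n
  induction n with
  | zero =>
    intro V _ _ _ hrank ρ u hu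
    have : Module.finrank K V = 0 := Nat.le_zero.mp hrank
    haveI : Subsingleton V := Module.finrank_zero_iff.mp this
    exact Subsingleton.elim _ _
  | succ n ih =>
    intro V _ _ _ hrank ρ u hu
    rcases subsingleton_or_nontrivial V with hV | hV
    · exact Subsingleton.elim _ _
    · obtain ⟨v, hv0, hv⟩ := heig V ρ (exists_ne 0)
      set c : H → K := fun h => Classical.choose (hv h) with hc_def
      have hc : ∀ h, ρ h v = c h • v := fun h => Classical.choose_spec (hv h)
      have hinj : ∀ a b : K, a • v = b • v → a = b := by
        intro a b hab
        by_contra hne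
        have : (a - b) • v = 0 := by rw [sub_smul, hab, sub_self]
        exact hv0 ((smul_eq_zero.mp this).resolve_left (sub_ne_zero.mpr hne))
      have hcne : ∀ h, c h ≠ 0 := by
        intro h h0
        apply hv0
        have h1 : ρ h⁻¹ (ρ h v) = v := by
          rw [← Module.End.mul_apply, ← map_mul, inv_mul_cancel, map_one, Module.End.one_apply]
        rw [hc h, h0, zero_smul, map_zero] at h1
        exact h1.symm
      have hcmul : ∀ g h : H, c (g * h) = c g * c h := by
        intro g h
        apply hinj
        rw [← hc (g * h), map_mul, Module.End.mul_apply, hc h, map_smul, hc g,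
          smul_smul, mul_comm (c h)]
      have hcone : c 1 = 1 := by
        apply hinj; rw [← hc 1, map_one, Module.End.one_apply, one_smul]
      let χ : H →* Kˣ :=
        { toFun := fun h => Units.mk0 (c h) (hcne h)
          map_one' := by ext; simp [hcone]
          map_mul' := fun g h => by ext; simp [hcmul] }
      have hcu : c u = 1 := congrArg Units.val (hu χ)
      have hρuv : ρ u v = v := by rw [hc u, hcu, one_smul]
      set L : Submodule K V := Submodule.span K {v} with hL
      have hLe : ∀ h : H, L ≤ L.comap (ρ h) := by
        intro h
        rw [hL, Submodule.span_singleton_le_iff_mem, Submodule.mem_comap, hc h]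
        exact Submodule.smul_mem _ _ (Submodule.mem_span_singleton_self v)
      let ρ' : Representation K H (V ⧸ L) :=
        { toFun := fun h => Submodule.mapQ L L (ρ h) (hLe h)
          map_one' := by
            apply Submodule.linearMap_qext
            ext x
            simp [Submodule.mapQ_apply]
          map_mul' := fun g h => by
            apply Submodule.linearMap_qext
            ext x
            simp [Submodule.mapQ_apply, map_mul] }
      have hrank' : Module.finrank K (V ⧸ L) ≤ n := by
        have h1 : Module.finrank K (V ⧸ L) + Module.finrank K L = Module.finrank K V :=
          Submodule.finrank_quotient_add_finrank L
        have h2 : Module.finrank K L = 1 := finrank_span_singleton hv0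
        omega
      have hIH := ih (V ⧸ L) hrank' ρ' u hu
      have hcompat : ∀ (k : ℕ) (x : V),
          (((ρ' u : Module.End K (V ⧸ L)) - 1) ^ k) (L.mkQ x) =
            L.mkQ ((((ρ u : Module.End K V) - 1) ^ k) x) := by
        intro k
        induction k with
        | zero => intro x; simp
        | succ k ihk =>
          intro x
          rw [pow_succ, pow_succ, Module.End.mul_apply, Module.End.mul_apply, ← ihk]
          congr 1
      ext x
      have hmem : (((ρ u : Module.End K V) - 1) ^ n) x ∈ L := by
        rw [← Submodule.Quotient.mk_eq_zero (p := L)]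
        show L.mkQ _ = 0
        rw [← hcompat n x, hIH]
        simp
      obtain ⟨a, ha⟩ := Submodule.mem_span_singleton.mp hmem
      rw [LinearMap.zero_apply, pow_succ', Module.End.mul_apply, ← ha]
      rw [map_smul, LinearMap.sub_apply, Module.End.one_apply, hρuv, sub_self, smul_zero]

theorem pow_X_add_one {K : Type} [Field K] (m : ℕ) :
    ∃ q : K[X], (X + 1 : K[X]) ^ m = 1 + C (m : K) * X + X ^ 2 * q := by
  induction m with
  | zero => exact ⟨0, by simp⟩
  | succ m ih =>
    obtain ⟨q, hq⟩ := ih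
    refine ⟨q * X + q + C (m : K), ?_⟩
    rw [pow_succ, hq]
    push_cast [C_add, C_1]
    ring

theorem order_eq_char_pow {K : Type} [Field K] {H : Type} [Group H] [Finite H]
    (heig : ∀ (V : Type) [AddCommGroup V] [Module K V] [FiniteDimensional K V]
        (ρ : Representation K H V), (∃ v : V, v ≠ 0) →
        ∃ v : V, v ≠ 0 ∧ ∀ h : H, ∃ c : K, ρ h v = c • v)
    (u : H) (hu : ∀ χ : H →* Kˣ, χ u = 1) :
    ∃ k : ℕ, orderOf u = ringChar K ^ k := by
  classical
  set ρ : Representation K H (MonoidAlgebra K H) := Representation.ofMulAction K H H with hρ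
  set n : ℕ := Module.finrank K (MonoidAlgebra K H) with hn
  have hNn : ((ρ u : Module.End K (MonoidAlgebra K H)) - 1) ^ n = 0 :=
    unipotent_of_common_eigen heig n (MonoidAlgebra K H) le_rfl ρ u hu
  set N : Module.End K (MonoidAlgebra K H) := (ρ u : Module.End K (MonoidAlgebra K H)) - 1 with hNdef
  have hρu : (ρ u : Module.End K (MonoidAlgebra K H)) = N + 1 := by rw [hNdef]; abel
  have hfaith : ∀ m : ℕ, (ρ u : Module.End K (MonoidAlgebra K H)) ^ m = 1 → u ^ m = 1 := by
    intro m hm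
    have h1 : (ρ (u ^ m) : Module.End K (MonoidAlgebra K H)) = 1 := by rw [map_pow]; exact hm
    have h2 := congrArg (fun f : Module.End K (MonoidAlgebra K H) => f (MonoidAlgebra.single 1 1)) h1
    simp only [Module.End.one_apply] at h2
    rw [hρ, Representation.ofMulAction_single] at h2
    have := MonoidAlgebra.single_left_injective (M := H) (one_ne_zero (α := K)) h2
    simpa using this
  rcases (CharP.char_is_prime_or_zero K (ringChar K)).symm with h0 | hp
  · -- characteristic zero: u = 1
    haveI : CharP K 0 := by rw [← h0]; exact ringChar.charP K
    haveI : CharZero K := CharP.charP_to_charZero K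
    set m : ℕ := orderOf u with hm
    have hm0 : 0 < m := orderOf_pos u
    have hum : (ρ u : Module.End K (MonoidAlgebra K H)) ^ m = 1 := by
      rw [← map_pow, hm, pow_orderOf_eq_one, map_one]
    obtain ⟨q, hq⟩ := pow_X_add_one (K := K) m
    have key := congrArg (Polynomial.aeval N) hq
    simp only [map_add, map_pow, map_mul, map_one, aeval_X, aeval_C] at key
    rw [← hρu, hum] at key
    have hmain : algebraMap K (Module.End K (MonoidAlgebra K H)) (m : K) * N
        + N ^ 2 * (aeval N) q = 0 := by
      have h2 : (1 : Module.End K (MonoidAlgebra K H)) + (algebraMap K (Module.End K (MonoidAlgebra K H)) (m : K) * N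
          + N ^ 2 * (aeval N) q) = 1 := by rw [← add_assoc]; exact key.symm
      calc algebraMap K (Module.End K (MonoidAlgebra K H)) (m : K) * N + N ^ 2 * (aeval N) q
          = -1 + (1 + (algebraMap K (Module.End K (MonoidAlgebra K H)) (m : K) * N
            + N ^ 2 * (aeval N) q)) := by abel
        _ = -1 + 1 := by rw [h2]
        _ = 0 := by abel
    have hkill : ∀ i : ℕ, N ^ (i + 2) = 0 → N ^ (i + 1) = 0 := by
      intro i h2
      have h3 := congrArg (fun f => N ^ i * f) hmain
      simp only [mul_add, mul_zero] at h3
      have e1 : N ^ i * (algebraMap K (Module.End K (MonoidAlgebra K H)) (m : K) * N)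
          = (m : K) • N ^ (i + 1) := by
        rw [← mul_assoc, ← Algebra.commutes ((m : K)) (N ^ i), mul_assoc, ← pow_succ,
          ← Algebra.smul_def]
      have e2 : N ^ i * (N ^ 2 * (aeval N) q) = 0 := by
        rw [← mul_assoc, ← pow_add]
        rw [show i + 2 = i + 2 from rfl] at h2
        rw [h2, zero_mul]
      rw [e1, e2, add_zero] at h3
      have hm' : (m : K) ≠ 0 := Nat.cast_ne_zero.mpr hm0.ne'
      exact (smul_eq_zero.mp h3).resolve_left hm'
    have hNzero : ∀ i : ℕ, N ^ (i + 1) = 0 → N = 0 := by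
      intro i
      induction i with
      | zero => intro h; simpa using h
      | succ i ihi => intro h; exact ihi (hkill i h)
    have hN1 : N ^ (n + 1) = 0 := by rw [pow_succ, hNn, zero_mul]
    have hN0 : N = 0 := hNzero n hN1
    have : (ρ u : Module.End K (MonoidAlgebra K H)) ^ 1 = 1 := by
      rw [pow_one, hρu, hN0, zero_add]
    have hu1 : u = 1 := by simpa using hfaith 1 this
    exact ⟨0, by rw [h0, pow_zero, hm, hu1, orderOf_one]⟩
  · -- characteristic p
    haveI hpf : Fact (ringChar K).Prime := ⟨hp⟩
    set p : ℕ := ringChar K with hpdef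
    haveI : CharP K p := ringChar.charP K
    haveI : CharP K[X] p := charP_of_injective_algebraMap (by rw [Polynomial.algebraMap_eq]; exact Polynomial.C_injective : Function.Injective (algebraMap K K[X])) p
    have hpoly : (X + 1 : K[X]) ^ p ^ n = X ^ p ^ n + 1 ^ p ^ n := add_pow_char_pow X 1 p n
    have key := congrArg (Polynomial.aeval N) hpoly
    simp only [map_add, map_pow, map_one, aeval_X, one_pow] at key
    rw [← hρu] at key
    have hnle : n ≤ p ^ n := (Nat.lt_pow_self (n := n) hp.one_lt).le
    have hNp : N ^ p ^ n = 0 := by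
      rw [← Nat.sub_add_cancel hnle, pow_add, hNn, mul_zero]
    rw [hNp, zero_add] at key
    have hupow : u ^ p ^ n = 1 := hfaith _ key
    have hdvd : orderOf u ∣ p ^ n := orderOf_dvd_of_pow_eq_one hupow
    obtain ⟨k, _, hk⟩ := (Nat.dvd_prime_pow hp).mp hdvd
    exact ⟨k, hk⟩

theorem eigenvector_tfae_unipotent_by_abelian {K : Type} [Field K] [IsAlgClosed K]
    (H : Type) [Group H] [Finite H] :
    (∀ (V : Type) [AddCommGroup V] [Module K V] [FiniteDimensional K V]
        (ρ : Representation K H V), (∃ v : V, v ≠ 0) →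
        ∃ v : V, v ≠ 0 ∧ ∀ h : H, ∃ c : K, ρ h v = c • v) ↔
      (∃ U : Subgroup H, U.Normal ∧
        (∀ u : H, u ∈ U → ∃ k : ℕ, orderOf u = ringChar K ^ k) ∧
        (∀ a b : H, a * b * a⁻¹ * b⁻¹ ∈ U)) := by
  classical
  constructor
  · intro h1
    refine ⟨{ carrier := {h : H | ∀ χ : H →* Kˣ, χ h = 1}
              one_mem' := fun χ => map_one χ
              mul_mem' := fun {a b} ha hb χ => by rw [map_mul, ha χ, hb χ, one_mul]
              inv_mem' := fun {a} ha χ => by rw [map_inv, ha χ, inv_one] }, ?_, ?_, ?_⟩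
    · constructor
      intro h hmem g χ
      simp only [Subgroup.mem_mk, Set.mem_setOf_eq] at hmem ⊢
      rw [map_mul, map_mul, hmem χ, mul_one, map_inv, mul_inv_cancel]
    · intro u hu
      exact order_eq_char_pow h1 u hu
    · intro a b χ
      rw [map_mul, map_mul, map_mul, map_inv, map_inv, mul_comm (χ a) (χ b)]
      group
  · rintro ⟨U, hNorm, hOrd, hComm⟩ V _ _ _ ρ ⟨v0, hv0⟩
    haveI := Fintype.ofFinite H
    rcases (CharP.char_is_prime_or_zero K (ringChar K)).symm with h0 | hp
    · -- char 0 : U is trivial, H abelian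
      have hU1 : ∀ u : H, u ∈ U → u = 1 := by
        intro u hu
        obtain ⟨k, hk⟩ := hOrd u hu
        rw [h0] at hk
        rcases Nat.eq_zero_or_pos k with rfl | hkpos
        · rw [pow_zero] at hk; exact orderOf_eq_one_iff.mp hk
        · rw [zero_pow hkpos.ne'] at hk
          exact absurd hk (orderOf_pos u).ne'
      have hab : ∀ a b : H, a * b = b * a := by
        intro a b
        have h := hU1 _ (hComm a b)
        calc a * b = (a * b * a⁻¹ * b⁻¹) * (b * a) := by group
        _ = 1 * (b * a) := by rw [h]
        _ = b * a := one_mul _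
      have hcomm : ∀ a b : H, Commute (ρ a : Module.End K V) (ρ b) := by
        intro a b
        show (ρ a : Module.End K V) * ρ b = ρ b * ρ a
        rw [← map_mul, ← map_mul, hab]
      obtain ⟨v, hv0', hv⟩ := exists_common_eigenvector Finset.univ V ⟨v0, hv0⟩
        (fun h : H => (ρ h : Module.End K V)) hcomm
      exact ⟨v, hv0', fun h => hv h (Finset.mem_univ h)⟩
    · -- char p : fixed space of U
      haveI hpf : Fact (ringChar K).Prime := ⟨hp⟩
      set p : ℕ := ringChar K with hpdef
      haveI : CharP K p := ringChar.charP K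
      have hP : IsPGroup p U := by
        intro u
        obtain ⟨k, hk⟩ := hOrd (u : H) u.2
        refine ⟨k, ?_⟩
        have h1 : (u : H) ^ p ^ k = 1 := by rw [← hk]; exact pow_orderOf_eq_one _
        ext
        simpa using h1
      obtain ⟨w, hw0, hwfix⟩ := exists_fixed_of_pgroup p hP (ρ.comp U.subtype) hv0
      let W : Submodule K V :=
        { carrier := {x : V | ∀ u : H, u ∈ U → ρ u x = x}
          zero_mem' := fun u _ => map_zero _
          add_mem' := fun {x y} hx hy u hu => by rw [map_add, hx u hu, hy u hu]
          smul_mem' := fun c x hx u hu => by rw [map_smul, hx u hu] }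
      have hwW : w ∈ W := fun u hu => hwfix ⟨u, hu⟩
      have hmaps : ∀ h : H, Set.MapsTo (ρ h) W W := by
        intro h x hx u hu
        have hconj : h⁻¹ * u * h ∈ U := by
          have := hNorm.conj_mem u hu h⁻¹
          simpa using this
        have heq : u * h = h * (h⁻¹ * u * h) := by group
        calc ρ u (ρ h x) = ρ (u * h) x := by rw [map_mul]; rfl
        _ = ρ h (ρ (h⁻¹ * u * h) x) := by rw [heq, map_mul]; rfl
        _ = ρ h x := by rw [hx _ hconj]
      have hcommW : ∀ a b : H,
          Commute ((ρ a).restrict (hmaps a)) ((ρ b).restrict (hmaps b)) := by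
        intro a b
        ext ⟨x, hx⟩
        have hba : ρ (b * a) x ∈ W := hmaps (b * a) hx
        have hc : a * b = (a * b * a⁻¹ * b⁻¹) * (b * a) := by group
        have key : ρ (a * b) x = ρ (b * a) x := by
          rw [hc, map_mul]
          exact hba _ (hComm a b)
        simp only [Module.End.mul_apply, Subtype.ext_iff, LinearMap.coe_restrict_apply]
        calc ρ a (ρ b x) = ρ (a * b) x := by rw [map_mul]; rfl
        _ = ρ (b * a) x := key
        _ = ρ b (ρ a x) := by rw [map_mul]; rfl
      have hexW : ∃ x : W, x ≠ 0 := ⟨⟨w, hwW⟩, by simp [Subtype.ext_iff, hw0]⟩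
      obtain ⟨v, hv0', hv⟩ := exists_common_eigenvector Finset.univ W hexW
        (fun h : H => (ρ h).restrict (hmaps h)) hcommW
      refine ⟨(v : V), by simpa [Submodule.coe_eq_zero] using hv0', ?_⟩
      intro h
      obtain ⟨c, hc⟩ := hv h (Finset.mem_univ h)
      exact ⟨c, by
        have := congrArg Subtype.val hc
        exact this⟩
end

section
/- Let K be an algebraically closed field and H a finite group admitting a normal subgroup U such that H/U is abelian and every element of U has order a power of char K (U trivial if char K = 0). Then every nonzero finite-dimensional representation of H over K has a common eigenvector, i.e. a nonzero vector v such that every h ∈ H sends v to a scalar multiple of v. -/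
/-- A commuting family of endomorphisms of a nonzero finite-dimensional vector space over an
algebraically closed field has a common eigenvector. -/
lemma aux_common_eigenvector {K : Type} [Field K] [IsAlgClosed K] {ι : Type}
    (n : ℕ) (V : Type) [AddCommGroup V] [Module K V] [FiniteDimensional K V] [Nontrivial V]
    (hn : Module.finrank K V ≤ n)
    (f : ι → Module.End K V) (hcomm : ∀ i j, Commute (f i) (f j)) :
    ∃ v : V, v ≠ 0 ∧ ∀ i, ∃ c : K, f i v = c • v := by
  induction n generalizing V with
  | zero =>
    have := Module.finrank_pos (R := K) (M := V)
    omega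
  | succ n ih =>
    by_cases hscal : ∀ i, ∃ c : K, ∀ w : V, f i w = c • w
    · obtain ⟨v, hv⟩ := exists_ne (0 : V)
      exact ⟨v, hv, fun i => (hscal i).imp fun c hc => hc v⟩
    · push_neg at hscal
      obtain ⟨i₀, hi₀⟩ := hscal
      obtain ⟨μ, hμ⟩ := Module.End.exists_eigenvalue (f i₀)
      set E := Module.End.eigenspace (f i₀) μ with hE
      have hEtop : E ≠ ⊤ := by
        intro h
        obtain ⟨w, hw⟩ := hi₀ μ
        apply hw
        have hwE : w ∈ E := h ▸ Submodule.mem_top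
        rwa [hE, Module.End.mem_eigenspace_iff] at hwE
      have hmap : ∀ i, ∀ x ∈ E, f i x ∈ E := by
        intro i x hx
        rw [hE, Module.End.mem_eigenspace_iff] at hx ⊢
        have h1 : f i₀ (f i x) = f i (f i₀ x) := LinearMap.congr_fun (hcomm i₀ i) x
        rw [h1, hx, map_smul]
      haveI : Nontrivial E := Submodule.nontrivial_iff_ne_bot.mpr hμ
      have hlt : Module.finrank K E ≤ n := by
        have := Submodule.finrank_lt (K := K) (V := V) hEtop
        omega
      set g : ι → Module.End K E := fun i => LinearMap.restrict (f i) (hmap i) with hg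
      have hgcomm : ∀ i j, Commute (g i) (g j) := by
        intro i j
        apply LinearMap.ext
        intro x
        apply Subtype.ext
        simp only [hg, Module.End.mul_apply, LinearMap.restrict_coe_apply]
        exact LinearMap.congr_fun (hcomm i j) (x : V)
      obtain ⟨v, hv0, hv⟩ := ih E hlt g hgcomm
      refine ⟨(v : V), by simpa using hv0, fun i => ?_⟩
      obtain ⟨c, hc⟩ := hv i
      refine ⟨c, ?_⟩
      have := congrArg (Subtype.val) hc
      simpa only [hg, LinearMap.restrict_coe_apply, SetLike.val_smul] using this

theorem exists_common_eigenvector_of_unipotent_by_abelian {K : Type} [Field K] [IsAlgClosed K]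
    (H : Type) [Group H] [Finite H] (U : Subgroup H) (hUnormal : U.Normal)
    (hUuni : ∀ u : H, u ∈ U → ∃ k : ℕ, orderOf u = ringChar K ^ k)
    (hUab : ∀ a b : H, a * b * a⁻¹ * b⁻¹ ∈ U)
    (V : Type) [AddCommGroup V] [Module K V] [FiniteDimensional K V]
    (ρ : Representation K H V) (hV : ∃ v : V, v ≠ 0) :
    ∃ v : V, v ≠ 0 ∧ ∀ h : H, ∃ c : K, ρ h v = c • v := by
  classical
  obtain ⟨v₀, hv₀⟩ := hV
  -- Step 1: there is a nonzero vector fixed by all of U.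
  have hfix : ∃ w : V, w ≠ 0 ∧ ∀ u ∈ U, ρ u w = w := by
    rcases (CharP.char_is_prime_or_zero K (ringChar K)).symm with h0 | hp
    · -- characteristic zero: U is trivial
      refine ⟨v₀, hv₀, fun u hu => ?_⟩
      obtain ⟨k, hk⟩ := hUuni u hu
      have hne : orderOf u ≠ 0 := (orderOf_pos u).ne'
      have hu1 : u = 1 := by
        rw [h0] at hk
        cases k with
        | zero => simpa [orderOf_eq_one_iff] using hk
        | succ k => rw [zero_pow (Nat.succ_ne_zero k)] at hk; exact absurd hk hne
      rw [hu1, map_one, Module.End.one_apply]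
    · -- characteristic p > 0
      set p := ringChar K with hpdef
      haveI : Fact p.Prime := ⟨hp⟩
      haveI : CharP K p := ringChar.charP K
      have hsmul : ∀ x : V, p • x = 0 := fun x => by
        rw [← Nat.cast_smul_eq_nsmul K, CharP.cast_eq_zero, zero_smul]
      haveI : Module (ZMod p) V := AddCommGroup.zmodModule hsmul
      set S : Submodule (ZMod p) V :=
        Submodule.span (ZMod p) (Set.range fun u : U => ρ (u : H) v₀) with hS
      haveI : Module.Finite (ZMod p) ↥S :=
        Module.Finite.span_of_finite (ZMod p)
          (Set.finite_range fun u : U => ρ (u : H) v₀)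
      haveI : Finite ↥S := Module.finite_of_finite (ZMod p)
      have hstab : ∀ u : H, u ∈ U → ∀ x ∈ S, ρ u x ∈ S := by
        intro u hu x hx
        induction hx using Submodule.span_induction with
        | mem x hx =>
          obtain ⟨u', rfl⟩ := hx
          exact Submodule.subset_span ⟨⟨u * u', mul_mem hu u'.2⟩, by simp [map_mul]⟩
        | zero => simp
        | add x y _ _ hx hy => rw [map_add]; exact add_mem hx hy
        | smul c x _ hx =>
          obtain ⟨m, rfl⟩ := ZMod.intCast_surjective c
          have h1 : ρ u ((m : ZMod p) • x) = (m : ZMod p) • ρ u x := by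
            rw [Int.cast_smul_eq_zsmul, Int.cast_smul_eq_zsmul, map_zsmul]
          rw [h1]
          exact Submodule.smul_mem _ _ hx
      letI : SMul U S := ⟨fun u x => ⟨ρ (u : H) (x : V), hstab u u.2 x x.2⟩⟩
      letI : MulAction U S :=
        { one_smul := fun x => Subtype.ext
            (show ρ ((1 : U) : H) (x : V) = x by simp)
          mul_smul := fun u u' x => Subtype.ext
            (show ρ ((u * u' : U) : H) (x : V) = ρ (u : H) (ρ (u' : H) (x : V)) by
              simp [map_mul]) }
      have hPU : IsPGroup p U := by
        intro g
        obtain ⟨k, hk⟩ := hUuni (g : H) g.2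
        refine ⟨k, ?_⟩
        have : orderOf g = p ^ k := by
          rw [← orderOf_injective U.subtype U.subtype_injective g]; exact hk
        rw [← this]; exact pow_orderOf_eq_one g
      have hv₀S : v₀ ∈ S := Submodule.subset_span ⟨1, by simp⟩
      have hdvd : p ∣ Nat.card S := by
        have h1 : ((⟨v₀, hv₀S⟩ : S) : V) ≠ 0 := hv₀
        have h2 : addOrderOf (⟨v₀, hv₀S⟩ : S) = p := by
          apply addOrderOf_eq_prime
          · exact Subtype.ext (hsmul v₀)
          · exact fun h => h1 (by rw [h]; rfl)
        have h3 := addOrderOf_dvd_natCard (⟨v₀, hv₀S⟩ : S)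
        rwa [h2] at h3
      have h0fix : (0 : S) ∈ MulAction.fixedPoints U S := by
        intro u
        exact Subtype.ext (show ρ ((u : U) : H) (0 : V) = 0 from map_zero _)
      obtain ⟨b, hbfix, hb0⟩ :=
        hPU.exists_fixed_point_of_prime_dvd_card_of_fixed_point (α := S) hdvd h0fix
      refine ⟨(b : V), fun h => hb0 (Subtype.ext h.symm), fun u hu => ?_⟩
      exact congrArg Subtype.val (hbfix ⟨u, hu⟩)
  obtain ⟨w₀, hw₀, hw₀fix⟩ := hfix
  -- Step 2: the subspace of U-fixed vectors
  set W : Submodule K V :=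
    { carrier := {x | ∀ u ∈ U, ρ u x = x}
      add_mem' := fun {x y} hx hy u hu => by rw [map_add, hx u hu, hy u hu]
      zero_mem' := fun u hu => map_zero _
      smul_mem' := fun c x hx u hu => by rw [map_smul, hx u hu] } with hW
  have hw₀W : w₀ ∈ W := hw₀fix
  haveI : Nontrivial W := ⟨⟨w₀, hw₀W⟩, 0, fun h => hw₀ (by simpa using congrArg Subtype.val h)⟩
  have hWstab : ∀ h : H, ∀ x ∈ W, ρ h x ∈ W := by
    intro h x hx u hu
    have h1 : h⁻¹ * u * h ∈ U := by
      have := hUnormal.conj_mem u hu h⁻¹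
      simpa using this
    calc ρ u (ρ h x) = ρ (u * h) x := by rw [map_mul]; rfl
      _ = ρ (h * (h⁻¹ * u * h)) x := by congr 1; group
      _ = ρ h (ρ (h⁻¹ * u * h) x) := by rw [map_mul]; rfl
      _ = ρ h x := by rw [hx _ h1]
  have hWcomm : ∀ g h : H, ∀ x ∈ W, ρ g (ρ h x) = ρ h (ρ g x) := by
    intro g h x hx
    have hc : g⁻¹ * h⁻¹ * g * h ∈ U := by simpa using hUab g⁻¹ h⁻¹
    have e1 : g * h = (h * g) * (g⁻¹ * h⁻¹ * g * h) := by group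
    calc ρ g (ρ h x) = ρ (g * h) x := by rw [map_mul]; rfl
      _ = ρ ((h * g) * (g⁻¹ * h⁻¹ * g * h)) x := by rw [← e1]
      _ = ρ (h * g) (ρ (g⁻¹ * h⁻¹ * g * h) x) := by rw [map_mul]; rfl
      _ = ρ (h * g) x := by rw [hx _ hc]
      _ = ρ h (ρ g x) := by rw [map_mul]; rfl
  set f : H → Module.End K W := fun h => LinearMap.restrict (ρ h) (hWstab h) with hf
  have hfcomm : ∀ g h : H, Commute (f g) (f h) := by
    intro g h
    apply LinearMap.ext
    intro x
    apply Subtype.ext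
    simp only [hf, Module.End.mul_apply, LinearMap.restrict_coe_apply]
    exact hWcomm g h (x : V) x.2
  obtain ⟨v, hv0, hv⟩ := aux_common_eigenvector (Module.finrank K W) W le_rfl f hfcomm
  refine ⟨(v : V), by simpa using hv0, fun h => ?_⟩
  obtain ⟨c, hc⟩ := hv h
  refine ⟨c, ?_⟩
  have := congrArg Subtype.val hc
  simpa only [hf, LinearMap.restrict_coe_apply, SetLike.val_smul] using this
end

section
/- Let K be a field, X an integral regular scheme of finite type over K, Y a scheme proper over K, and f : X ⤏ Y a rational map over K. Then f is defined at every point of X of codimension at most 1; equivalently, the complement of the domain of definition of f has codimension at least 2 in X. -/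
/-!
Let `K` be a field, `X` an integral regular scheme of finite type over `K` (regular: each
stalk is a regular local ring, i.e. its Krull dimension equals the dimension of its cotangent
space — the stalks are Noetherian since `X` is of finite type over a field), `Y` a scheme
proper over `K`, and `f : X ⤏ Y` a rational map over `K`.  Then `f` is defined at every
point of `X` of codimension at most `1`, i.e. every point whose local ring has Krull
dimension `≤ 1` belongs to the domain of definition of `f`.
-/

open CategoryTheory AlgebraicGeometry AlgebraicGeometry.Scheme

universe u

lemma opens_fromSpecStalkOfMem_specializes {X : Scheme.{u}} (U : X.Opens) {x y : X}
    (h : x ⤳ y) (hx : x ∈ U) (hy : y ∈ U) :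
    U.fromSpecStalkOfMem x hx =
      Spec.map (X.presheaf.stalkSpecializes h) ≫ U.fromSpecStalkOfMem y hy := by
  rw [← cancel_mono U.ι]
  simp [Opens.fromSpecStalkOfMem_ι]

lemma partialMap_fromSpecStalkOfMem_specializes {X Y : Scheme.{u}} (p : X.PartialMap Y)
    {x y : X} (h : x ⤳ y) (hx : x ∈ p.domain) (hy : y ∈ p.domain) :
    p.fromSpecStalkOfMem hx =
      Spec.map (X.presheaf.stalkSpecializes h) ≫ p.fromSpecStalkOfMem hy := by
  rw [PartialMap.fromSpecStalkOfMem, PartialMap.fromSpecStalkOfMem,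
    opens_fromSpecStalkOfMem_specializes p.domain h hx hy, Category.assoc]

lemma stalk_noetherian {K : Type u} [Field K] {X : Scheme.{u}}
    (sX : X ⟶ Spec (CommRingCat.of K)) [LocallyOfFiniteType sX] (x : X) :
    IsNoetherianRing (X.presheaf.stalk x) := by
  let V : X.Opens := (X.affineCover.f (X.affineCover.idx x)).opensRange
  have hV : IsAffineOpen V := isAffineOpen_opensRange (X.affineCover.f (X.affineCover.idx x))
  have hxV : x ∈ V := X.affineCover.covers x
  have e : V ≤ sX ⁻¹ᵁ ⊤ := by simp
  have hft : RingHom.FiniteType (sX.appLE ⊤ V e).hom :=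
    HasRingHomProperty.appLE (P := @LocallyOfFiniteType) sX ‹_›
      ⟨⊤, isAffineOpen_top _⟩ ⟨V, hV⟩ e
  have hNoeth : IsNoetherianRing ↥(Γ(X, V)) := by
    have hK : IsNoetherianRing ↥(Γ(Spec (CommRingCat.of K), ⊤)) :=
      isNoetherianRing_of_ringEquiv K
        (Scheme.ΓSpecIso (CommRingCat.of K)).symm.commRingCatIsoToRingEquiv
    letI := (sX.appLE ⊤ V e).hom.toAlgebra
    haveI : Algebra.FiniteType ↥(Γ(Spec (CommRingCat.of K), ⊤)) ↥(Γ(X, V)) := hft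
    exact Algebra.FiniteType.isNoetherianRing ↥(Γ(Spec (CommRingCat.of K), ⊤)) ↥(Γ(X, V))
  have := hV.isLocalization_stalk ⟨x, hxV⟩
  letI := X.presheaf.algebra_section_stalk (⟨x, hxV⟩ : V)
  exact IsLocalization.isNoetherianRing (hV.primeIdealOf ⟨x, hxV⟩).asIdeal.primeCompl
    (X.presheaf.stalk x) hNoeth

theorem mem_domain_of_codim_le_one {K : Type u} [Field K] {X Y : Scheme.{u}}
    (sX : X ⟶ Spec (CommRingCat.of K)) (sY : Y ⟶ Spec (CommRingCat.of K))
    [IsIntegral X] [LocallyOfFiniteType sX] [QuasiCompact sX]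
    (hreg : ∀ x : X, ringKrullDim (X.presheaf.stalk x) =
      (Module.finrank (IsLocalRing.ResidueField (X.presheaf.stalk x))
        (IsLocalRing.CotangentSpace (X.presheaf.stalk x)) : WithBot ℕ∞))
    (f : X ⤏ Y)
    (hfK : ∃ g : X.PartialMap Y, g.toRationalMap = f ∧ g.hom ≫ sY = g.domain.ι ≫ sX)
    (hproper : IsProper sY)
    (x : X) (hx : ringKrullDim (X.presheaf.stalk x) ≤ 1) :
    x ∈ f.domain := by
  obtain ⟨g, hg, hgO⟩ := hfK
  haveI : LocallyOfFiniteType sY := hproper.toLocallyOfFiniteType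
  have hvc : ValuativeCriterion sY := by
    have : (ValuativeCriterion ⊓ @QuasiCompact ⊓ @QuasiSeparated ⊓ @LocallyOfFiniteType) sY := by
      rw [← IsProper.eq_valuativeCriterion]; exact hproper
    exact this.1.1.1
  haveI : IsDomain ↥(X.presheaf.stalk x) :=
    (IsFractionRing.injective (X.presheaf.stalk x) X.functionField).isDomain
  haveI : IsNoetherianRing ↥(X.presheaf.stalk x) := stalk_noetherian sX x
  have hfr : Module.finrank (IsLocalRing.ResidueField ↥(X.presheaf.stalk x))
      (IsLocalRing.CotangentSpace ↥(X.presheaf.stalk x)) ≤ 1 := by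
    rw [hreg x] at hx
    exact_mod_cast hx
  haveI hval : ValuationRing ↥(X.presheaf.stalk x) :=
    ((tfae_of_isNoetherianRing_of_isLocalRing_of_isDomain (X.presheaf.stalk x)).out 5 1).mp hfr
  set σ : X.presheaf.stalk x ⟶ X.functionField :=
    X.presheaf.stalkSpecializes ((genericPoint_spec X).specializes trivial) with hσ
  have halg : CommRingCat.ofHom (algebraMap ↥(X.presheaf.stalk x) ↥X.functionField) = σ := rfl
  have hξdom : genericPoint X ∈ g.domain :=
    ((genericPoint_specializes _).mem_open g.domain.2 g.dense_domain.nonempty.choose_spec)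
  let Sq : ValuativeCommSq sY :=
    { R := ↥(X.presheaf.stalk x)
      commRing := inferInstance
      K := ↥X.functionField
      i₁ := g.fromFunctionField
      i₂ := X.fromSpecStalk x ≫ sX
      commSq := by
        constructor
        show g.fromFunctionField ≫ sY = _
        rw [halg]
        show (g.domain.fromSpecStalkOfMem _ hξdom ≫ g.hom) ≫ sY = _
        rw [Category.assoc, hgO, Opens.fromSpecStalkOfMem_ι_assoc, hσ,
          SpecMap_stalkSpecializes_fromSpecStalk_assoc] }
  obtain ⟨l⟩ := (hvc.existence Sq).exists_lift
  have hfacl : Spec.map σ ≫ l.l = g.fromFunctionField := l.fac_left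
  have hfacr : l.l ≫ sY = X.fromSpecStalk x ≫ sX := l.fac_right
  let g' : X.PartialMap Y := PartialMap.ofFromSpecStalk sX sY l.l hfacr
  refine RationalMap.mem_domain.mpr
    ⟨g', PartialMap.mem_domain_ofFromSpecStalk sX sY l.l hfacr, ?_⟩
  apply RationalMap.eq_of_fromFunctionField_eq
  rw [← hg, RationalMap.fromFunctionField_toRationalMap,
    RationalMap.fromFunctionField_toRationalMap]
  have h1 : g'.fromSpecStalkOfMem (PartialMap.mem_domain_ofFromSpecStalk sX sY l.l hfacr) = l.l :=
    PartialMap.fromSpecStalkOfMem_ofFromSpecStalk sX sY l.l hfacr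
  have h2 : g'.fromFunctionField = Spec.map σ ≫ l.l := by
    rw [← h1, hσ]
    exact partialMap_fromSpecStalkOfMem_specializes g' _ _ _
  rw [h2, hfacl]
end
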